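/- If the Δ-AI loss L_Δ(x, u, x'_u) = [∑_{k: u∈S_k} log(φ_k(x_{S_k})/φ_k(x'_{S_k})) − ∑_{v∈{u}∪Ch(u)} log(q(x_v|x_{Pa(v)})/q(x'_v|x'_{Pa(v)}))]² equals zero for all x ∈ {0,1}^V, all u ∈ V, and all values x'_u ≠ x_u, then q = p where p(x) ∝ ∏_k φ_k(x_{S_k}). -/

import Mathlib

private lemma sum_flip_aux {V : Type*} [Fintype V] [DecidableEq V] (m : V)
    (g : (V → Bool) → ℝ) :
    ∑ σ : V → Bool, g σ = ∑ σ : V → Bool, g (Function.update σ m (!σ m)) := by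
  have hinv : Function.Involutive (fun σ : V → Bool => Function.update σ m (!σ m)) := by
    intro σ
    funext v
    by_cases h : v = m
    · subst h; simp [Function.update_self]
    · simp [Function.update_of_ne h]
  exact (Fintype.sum_bijective _ hinv.bijective _ _ (fun σ => congrArg g (hinv σ).symm))

private lemma sum_split_aux {V : Type*} [Fintype V] [DecidableEq V] (m : V)
    (g : (V → Bool) → ℝ) :
    ∑ σ : V → Bool, g σ
      = ∑ σ : V → Bool, (if σ m = true then g σ + g (Function.update σ m false) else 0) := by
  have h1 : ∑ σ : V → Bool, g σ
      = ∑ σ : V → Bool, ((if σ m = true then g σ else 0) + (if σ m = false then g σ else 0)) := by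
    refine Finset.sum_congr rfl fun σ _ => ?_
    cases h : σ m <;> simp [h]
  rw [h1, Finset.sum_add_distrib]
  have h2 : ∑ σ : V → Bool, (if σ m = false then g σ else 0)
      = ∑ σ : V → Bool, (if σ m = true then g (Function.update σ m false) else 0) := by
    rw [sum_flip_aux m (fun σ => if σ m = false then g σ else 0)]
    refine Finset.sum_congr rfl fun σ _ => ?_
    cases h : σ m <;> simp [h, Function.update_self]
  rw [h2, ← Finset.sum_add_distrib]
  refine Finset.sum_congr rfl fun σ _ => ?_
  cases h : σ m <;> simp [h]

private lemma sum_cond_swap_aux {V : Type*} [Fintype V] [DecidableEq V] (m : V) (b : Bool)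
    (h : (V → Bool) → ℝ) (hind : ∀ σ b', h (Function.update σ m b') = h σ) :
    ∑ σ : V → Bool, (if σ m = true then h σ else 0)
      = ∑ σ : V → Bool, (if σ m = b then h σ else 0) := by
  cases b
  · rw [sum_flip_aux m (fun σ => if σ m = true then h σ else 0)]
    refine Finset.sum_congr rfl fun σ _ => ?_
    cases hh : σ m <;> simp [hh, Function.update_self, hind]
  · rfl

private lemma bn_norm_aux {V : Type*} [Fintype V] [DecidableEq V]
    (A : V → V → Prop)
    (hacyc : ∀ v, ¬ Relation.TransGen A v v)
    (c : V → (V → Bool) → Bool → ℝ)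
    (hcloc : ∀ v x y b, (∀ w, A w v → x w = y w) → c v x b = c v y b)
    (hcnorm : ∀ v x, c v x true + c v x false = 1) :
    ∀ (T : Finset V) (x : V → Bool),
      ∑ σ : V → Bool, (if ∀ v ∉ T, σ v = x v then ∏ v ∈ T, c v σ (σ v) else 0) = 1 := by
  intro T
  induction T using Finset.strongInduction with
  | _ T ih =>
    intro x
    rcases T.eq_empty_or_nonempty with rfl | hne
    · have : ∀ σ : V → Bool,
          (if ∀ v ∉ (∅ : Finset V), σ v = x v then ∏ v ∈ (∅ : Finset V), c v σ (σ v) else 0)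
            = if σ = x then (1:ℝ) else 0 := by
        intro σ
        by_cases h : σ = x
        · subst h; simp
        · have : ¬ ∀ v ∉ (∅ : Finset V), σ v = x v := by
            intro hall
            exact h (funext fun v => hall v (Finset.notMem_empty v))
          rw [if_neg this, if_neg h]
      rw [Finset.sum_congr rfl (fun σ _ => this σ)]
      simp
    · -- find a maximal element m of T w.r.t. TransGen A
      haveI : IsTrans V (fun a b => Relation.TransGen A b a) :=
        ⟨fun a b c' h1 h2 => Relation.TransGen.trans h2 h1⟩
      haveI : IsIrrefl V (fun a b => Relation.TransGen A b a) := ⟨fun a h => hacyc a h⟩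
      obtain ⟨m, hmT, hmax⟩ :=
        (Finite.wellFounded_of_trans_of_irrefl (fun a b => Relation.TransGen A b a)).has_min
          (↑T : Set V) (Finset.coe_nonempty.mpr hne)
      have hnA : ∀ v ∈ T, ¬ A m v := fun v hv hA =>
        hmax v hv (Relation.TransGen.single hA)
      have hmm : ¬ A m m := fun hA => hacyc m (Relation.TransGen.single hA)
      set T' := T.erase m with hT'
      have hsub : T' ⊂ T := Finset.erase_ssubset hmT
      -- key per-σ computation
      set g : (V → Bool) → ℝ :=
        fun σ => if ∀ v ∉ T, σ v = x v then ∏ v ∈ T, c v σ (σ v) else 0 with hg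
      set h : (V → Bool) → ℝ :=
        fun σ => if ∀ v ∉ T, σ v = x v then ∏ v ∈ T', c v σ (σ v) else 0 with hh
      have hcv : ∀ (σ : V → Bool) (b : Bool) (v : V), v ∈ T' →
          c v (Function.update σ m b) ((Function.update σ m b) v) = c v σ (σ v) := by
        intro σ b v hv
        have hvm : v ≠ m := Finset.ne_of_mem_erase hv
        rw [Function.update_of_ne hvm]
        refine hcloc v _ _ _ fun w hw => ?_
        have : w ≠ m := fun he => hnA v (Finset.mem_of_mem_erase hv) (by rwa [he] at hw)
        exact Function.update_of_ne this _ _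
      have hprod : ∀ (σ : V → Bool) (b : Bool),
          ∏ v ∈ T', c v (Function.update σ m b) ((Function.update σ m b) v)
            = ∏ v ∈ T', c v σ (σ v) :=
        fun σ b => Finset.prod_congr rfl fun v hv => hcv σ b v hv
      have hindg : ∀ σ b', (∀ v ∉ T, σ v = x v) ↔ (∀ v ∉ T, (Function.update σ m b') v = x v) := by
        intro σ b'
        constructor <;> intro hal v hv
        · rw [Function.update_of_ne (fun he : v = m => hv (by rwa [he]))]; exact hal v hv
        · have := hal v hv
          rwa [Function.update_of_ne (fun he : v = m => hv (by rwa [he]))] at this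
      have hindh : ∀ σ b', h (Function.update σ m b') = h σ := by
        intro σ b'
        simp only [hh]
        by_cases hc : ∀ v ∉ T, σ v = x v
        · rw [if_pos hc, if_pos ((hindg σ b').mp hc), hprod]
        · rw [if_neg hc, if_neg (fun hc2 => hc ((hindg σ b').mpr hc2))]
      calc ∑ σ : V → Bool, g σ
          = ∑ σ : V → Bool, (if σ m = true then g σ + g (Function.update σ m false) else 0) :=
            sum_split_aux m g
        _ = ∑ σ : V → Bool, (if σ m = true then h σ else 0) := by
            refine Finset.sum_congr rfl fun σ _ => ?_
            by_cases hsm : σ m = true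
            · rw [if_pos hsm, if_pos hsm]
              by_cases hc : ∀ v ∉ T, σ v = x v
              · have e1 : g σ = c m σ true * ∏ v ∈ T', c v σ (σ v) := by
                  simp only [hg]
                  rw [if_pos hc, ← Finset.mul_prod_erase T _ hmT, hsm]
                have e2 : g (Function.update σ m false)
                    = c m σ false * ∏ v ∈ T', c v σ (σ v) := by
                  simp only [hg]
                  rw [if_pos ((hindg σ false).mp hc), ← Finset.mul_prod_erase T _ hmT,
                    Function.update_self]
                  rw [show (T.erase m) = T' from rfl, hprod σ false]
                  congr 1
                  exact hcloc m _ _ _ fun w hw =>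
                    Function.update_of_ne (fun he => hmm (by rwa [he] at hw)) _ _
                have e3 : h σ = ∏ v ∈ T', c v σ (σ v) := by
                  simp only [hh]; rw [if_pos hc]
                rw [e1, e2, e3, ← add_mul, hcnorm, one_mul]
              · have e1 : g σ = 0 := by simp only [hg]; rw [if_neg hc]
                have e2 : g (Function.update σ m false) = 0 := by
                  simp only [hg]
                  rw [if_neg (fun hc2 => hc ((hindg σ false).mpr hc2))]
                have e3 : h σ = 0 := by simp only [hh]; rw [if_neg hc]
                rw [e1, e2, e3, add_zero]
            · rw [if_neg hsm, if_neg hsm]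
        _ = ∑ σ : V → Bool, (if σ m = x m then h σ else 0) := sum_cond_swap_aux m (x m) h hindh
        _ = ∑ σ : V → Bool, (if ∀ v ∉ T', σ v = x v then ∏ v ∈ T', c v σ (σ v) else 0) := by
            refine Finset.sum_congr rfl fun σ _ => ?_
            simp only [hh]
            by_cases h1 : σ m = x m <;> by_cases h2 : ∀ v ∉ T, σ v = x v
            · rw [if_pos h1, if_pos h2, if_pos]
              intro v hv
              by_cases he : v = m
              · subst he; exact h1
              · exact h2 v (fun hvT => hv (Finset.mem_erase.mpr ⟨he, hvT⟩))
            · rw [if_pos h1, if_neg h2, if_neg]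
              intro hall
              exact h2 fun v hv => hall v (fun hv' => hv (Finset.mem_of_mem_erase hv'))
            · rw [if_neg h1, if_neg]
              intro hall
              exact h1 (hall m (Finset.notMem_erase m T))
            · rw [if_neg h1, if_neg]
              intro hall
              exact h1 (hall m (Finset.notMem_erase m T))
        _ = 1 := ih T' hsub x


theorem stmt_14 {V : Type*} [Fintype V] [DecidableEq V] {K : ℕ}
    (S : Fin K → Finset V) (φ : Fin K → (V → Bool) → ℝ)
    (hφpos : ∀ k x, 0 < φ k x)
    (hφloc : ∀ k x y, (∀ v ∈ S k, x v = y v) → φ k x = φ k y)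
    (Z : ℝ) (hZ : Z = ∑ x : V → Bool, ∏ k, φ k x)
    (p : (V → Bool) → ℝ) (hpdef : ∀ x, p x = (∏ k, φ k x) / Z)
    (A : V → V → Prop) [DecidableRel A]
    (hacyc : ∀ v, ¬ Relation.TransGen A v v)
    (c : V → (V → Bool) → Bool → ℝ)
    (hcpos : ∀ v x b, 0 < c v x b)
    (hcloc : ∀ v x y b, (∀ w, A w v → x w = y w) → c v x b = c v y b)
    (hcnorm : ∀ v x, c v x true + c v x false = 1)
    (q : (V → Bool) → ℝ) (hqdef : ∀ x, q x = ∏ v, c v x (x v))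
    (hloss : ∀ (x : V → Bool) (u : V) (b : Bool), b ≠ x u →
      ((∑ k ∈ Finset.univ.filter (fun k => u ∈ S k),
          Real.log (φ k x / φ k (Function.update x u b)))
       - ∑ v ∈ insert u (Finset.univ.filter (fun v => A u v)),
          Real.log (c v x (x v) / c v (Function.update x u b) (Function.update x u b v))) ^ 2
        = 0) :
    q = p := by
  have hΦpos : ∀ x : V → Bool, 0 < ∏ k, φ k x :=
    fun x => Finset.prod_pos fun k _ => hφpos k x
  have hqpos : ∀ x, 0 < q x := fun x => by
    rw [hqdef]; exact Finset.prod_pos fun v _ => hcpos v x (x v)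
  have hZpos : 0 < Z := by
    rw [hZ]
    exact Finset.sum_pos (fun x _ => hΦpos x) ⟨fun _ => true, Finset.mem_univ _⟩
  have hsumq : ∑ x : V → Bool, q x = 1 := by
    have hbn := bn_norm_aux A hacyc c hcloc hcnorm Finset.univ (fun _ => true)
    rw [← hbn]
    refine Finset.sum_congr rfl fun σ _ => ?_
    rw [if_pos (fun v hv => absurd (Finset.mem_univ v) hv), hqdef]
  have hstep : ∀ (x : V → Bool) (u : V) (b : Bool), b ≠ x u →
      (∏ k, φ k x) * q (Function.update x u b)
        = (∏ k, φ k (Function.update x u b)) * q x := by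
    intro x u b hb
    set x' := Function.update x u b with hx'
    have h0 := hloss x u b hb
    rw [pow_eq_zero_iff (two_ne_zero), sub_eq_zero] at h0
    have hs1 : (∑ k ∈ Finset.univ.filter (fun k => u ∈ S k),
          Real.log (φ k x / φ k x'))
        = Real.log (∏ k, φ k x) - Real.log (∏ k, φ k x') := by
      have hext : ∀ k ∈ (Finset.univ : Finset (Fin K)),
          k ∉ Finset.univ.filter (fun k => u ∈ S k) →
          Real.log (φ k x / φ k x') = 0 := by
        intro k _ hk
        have hu : u ∉ S k := fun hu => hk (Finset.mem_filter.mpr ⟨Finset.mem_univ _, hu⟩)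
        have heq : φ k x = φ k x' := hφloc k x x' fun v hv =>
          (Function.update_of_ne (fun he : v = u => hu (by rwa [← he])) b x).symm
        rw [heq, div_self (hφpos k x').ne', Real.log_one]
      calc (∑ k ∈ Finset.univ.filter (fun k => u ∈ S k), Real.log (φ k x / φ k x'))
          = ∑ k : Fin K, Real.log (φ k x / φ k x') :=
            Finset.sum_subset (Finset.subset_univ _) hext
        _ = ∑ k : Fin K, (Real.log (φ k x) - Real.log (φ k x')) :=
            Finset.sum_congr rfl fun k _ =>
              Real.log_div (hφpos k x).ne' (hφpos k x').ne'
        _ = (∑ k : Fin K, Real.log (φ k x)) - ∑ k : Fin K, Real.log (φ k x') :=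
            Finset.sum_sub_distrib _ _
        _ = Real.log (∏ k, φ k x) - Real.log (∏ k, φ k x') := by
            rw [Real.log_prod (fun k _ => (hφpos k x).ne'),
              Real.log_prod (fun k _ => (hφpos k x').ne')]
    have hs2 : (∑ v ∈ insert u (Finset.univ.filter (fun v => A u v)),
          Real.log (c v x (x v) / c v x' (x' v)))
        = Real.log (q x) - Real.log (q x') := by
      have hext : ∀ v ∈ (Finset.univ : Finset V),
          v ∉ insert u (Finset.univ.filter (fun v => A u v)) →
          Real.log (c v x (x v) / c v x' (x' v)) = 0 := by
        intro v _ hv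
        have hvu : v ≠ u := fun he : v = u => hv (by rw [he]; exact Finset.mem_insert_self u _)
        have hAuv : ¬ A u v := fun hA =>
          hv (Finset.mem_insert_of_mem (Finset.mem_filter.mpr ⟨Finset.mem_univ _, hA⟩))
        have hxv : x' v = x v := Function.update_of_ne hvu b x
        have heq : c v x' (x v) = c v x (x v) := hcloc v x' x (x v) fun w hw =>
          Function.update_of_ne (fun he : w = u => hAuv (by rwa [he] at hw)) b x
        rw [hxv, heq, div_self (hcpos v x (x v)).ne', Real.log_one]
      calc (∑ v ∈ insert u (Finset.univ.filter (fun v => A u v)),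
            Real.log (c v x (x v) / c v x' (x' v)))
          = ∑ v : V, Real.log (c v x (x v) / c v x' (x' v)) :=
            Finset.sum_subset (Finset.subset_univ _) hext
        _ = ∑ v : V, (Real.log (c v x (x v)) - Real.log (c v x' (x' v))) :=
            Finset.sum_congr rfl fun v _ =>
              Real.log_div (hcpos v x (x v)).ne' (hcpos v x' (x' v)).ne'
        _ = (∑ v : V, Real.log (c v x (x v))) - ∑ v : V, Real.log (c v x' (x' v)) :=
            Finset.sum_sub_distrib _ _
        _ = Real.log (q x) - Real.log (q x') := by
            rw [hqdef x, hqdef x',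
              Real.log_prod (fun v _ => (hcpos v x (x v)).ne'),
              Real.log_prod (fun v _ => (hcpos v x' (x' v)).ne')]
    rw [hs1, hs2] at h0
    have hlogeq : Real.log ((∏ k, φ k x) * q x') = Real.log ((∏ k, φ k x') * q x) := by
      rw [Real.log_mul (hΦpos x).ne' (hqpos x').ne',
        Real.log_mul (hΦpos x').ne' (hqpos x).ne']
      linarith
    have := congrArg Real.exp hlogeq
    rwa [Real.exp_log (mul_pos (hΦpos x) (hqpos x')),
      Real.exp_log (mul_pos (hΦpos x') (hqpos x))] at this
  have key : ∀ (n : ℕ) (x y : V → Bool),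
      (Finset.univ.filter (fun v => x v ≠ y v)).card = n →
      (∏ k, φ k x) * q y = (∏ k, φ k y) * q x := by
    intro n
    induction n with
    | zero =>
      intro x y hcard
      have hxy : x = y := by
        funext v
        by_contra hv
        have hmem : v ∈ Finset.univ.filter (fun v => x v ≠ y v) :=
          Finset.mem_filter.mpr ⟨Finset.mem_univ _, hv⟩
        rw [Finset.card_eq_zero] at hcard
        rw [hcard] at hmem
        exact absurd hmem (Finset.notMem_empty v)
      rw [hxy]
    | succ n ih =>
      intro x y hcard
      have hne : (Finset.univ.filter (fun v => x v ≠ y v)).Nonempty := by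
        rw [← Finset.card_pos, hcard]; omega
      obtain ⟨u, hu⟩ := hne
      have hxyu : x u ≠ y u := (Finset.mem_filter.mp hu).2
      set x₁ := Function.update x u (y u) with hx₁
      have e1 := hstep x u (y u) (Ne.symm hxyu)
      have hfil : Finset.univ.filter (fun v => x₁ v ≠ y v)
          = (Finset.univ.filter (fun v => x v ≠ y v)).erase u := by
        ext v
        simp only [Finset.mem_filter, Finset.mem_erase, Finset.mem_univ, true_and]
        by_cases hv : v = u
        · subst hv; simp [hx₁, Function.update_self]
        · simp [hx₁, Function.update_of_ne hv, hv]
      have e2 := ih x₁ y (by rw [hfil, Finset.card_erase_of_mem hu, hcard]; rfl)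
      have hc1 : (∏ k, φ k x₁) ≠ 0 := (hΦpos x₁).ne'
      have hc2 : q x₁ ≠ 0 := (hqpos x₁).ne'
      apply mul_right_cancel₀ (mul_ne_zero hc1 hc2)
      calc (∏ k, φ k x) * q y * ((∏ k, φ k x₁) * q x₁)
          = ((∏ k, φ k x) * q x₁) * ((∏ k, φ k x₁) * q y) := by ring
        _ = ((∏ k, φ k x₁) * q x) * ((∏ k, φ k y) * q x₁) := by rw [e1, e2]
        _ = (∏ k, φ k y) * q x * ((∏ k, φ k x₁) * q x₁) := by ring
  funext x
  have hfin : q x * Z = ∏ k, φ k x := by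
    rw [hZ, Finset.mul_sum]
    have hterm : ∀ y ∈ (Finset.univ : Finset (V → Bool)),
        q x * (∏ k, φ k y) = (∏ k, φ k x) * q y := by
      intro y _
      have := key _ x y rfl
      linarith [this]
    rw [Finset.sum_congr rfl hterm, ← Finset.mul_sum, hsumq, mul_one]
  rw [hpdef, eq_div_iff hZpos.ne']
  exact hfin
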